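/- For any continuous positive definite function κ : ℝ≥0 → ℝ≥0 (i.e., κ continuous, κ(0)=0, κ(s)>0 for s>0), there exist a function ρ₁ of class K∞ (continuous, strictly increasing, ρ₁(0)=0, unbounded) and a function ρ₂ of class L (continuous, strictly decreasing to 0 at infinity, positive) such that κ(s) ≥ ρ₁(s)·ρ₂(s) for all s ≥ 0. -/

import Mathlib

open MeasureTheory Set Filter

noncomputable section

/-- Nondecreasing lower envelope. -/
def icf (f : ℝ → ℝ) (T : Set ℝ) (u : ℝ) : ℝ :=
  sInf ((fun t => f t + max (u - t) 0) '' T)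

/-- Nonincreasing lower envelope. -/
def dcf (f : ℝ → ℝ) (T : Set ℝ) (u : ℝ) : ℝ :=
  sInf ((fun t => f t + max (t - u) 0) '' T)

variable {f : ℝ → ℝ} {T : Set ℝ}

lemma icf_bdd (hf : ∀ t ∈ T, 0 ≤ f t) (u : ℝ) :
    BddBelow ((fun t => f t + max (u - t) 0) '' T) := by
  refine ⟨0, ?_⟩
  rintro x ⟨t, ht, rfl⟩
  have := hf t ht
  positivity

lemma dcf_bdd (hf : ∀ t ∈ T, 0 ≤ f t) (u : ℝ) :
    BddBelow ((fun t => f t + max (t - u) 0) '' T) := by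
  refine ⟨0, ?_⟩
  rintro x ⟨t, ht, rfl⟩
  have := hf t ht
  positivity

lemma icf_le (hf : ∀ t ∈ T, 0 ≤ f t) {t : ℝ} (ht : t ∈ T) (u : ℝ) :
    icf f T u ≤ f t + max (u - t) 0 :=
  csInf_le (icf_bdd hf u) ⟨t, ht, rfl⟩

lemma dcf_le (hf : ∀ t ∈ T, 0 ≤ f t) {t : ℝ} (ht : t ∈ T) (u : ℝ) :
    dcf f T u ≤ f t + max (t - u) 0 :=
  csInf_le (dcf_bdd hf u) ⟨t, ht, rfl⟩

lemma le_icf (hne : T.Nonempty) {c u : ℝ} (h : ∀ t ∈ T, c ≤ f t + max (u - t) 0) :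
    c ≤ icf f T u := by
  refine le_csInf (hne.image _) ?_
  rintro x ⟨t, ht, rfl⟩
  exact h t ht

lemma le_dcf (hne : T.Nonempty) {c u : ℝ} (h : ∀ t ∈ T, c ≤ f t + max (t - u) 0) :
    c ≤ dcf f T u := by
  refine le_csInf (hne.image _) ?_
  rintro x ⟨t, ht, rfl⟩
  exact h t ht

lemma icf_nonneg (hne : T.Nonempty) (hf : ∀ t ∈ T, 0 ≤ f t) (u : ℝ) : 0 ≤ icf f T u := by
  refine le_icf hne fun t ht => ?_
  have := hf t ht
  positivity

lemma dcf_nonneg (hne : T.Nonempty) (hf : ∀ t ∈ T, 0 ≤ f t) (u : ℝ) : 0 ≤ dcf f T u := by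
  refine le_dcf hne fun t ht => ?_
  have := hf t ht
  positivity

lemma icf_mono (hne : T.Nonempty) (hf : ∀ t ∈ T, 0 ≤ f t) : Monotone (icf f T) := by
  intro u v huv
  refine le_icf hne fun t ht => ?_
  refine (icf_le hf ht u).trans ?_
  have : max (u - t) 0 ≤ max (v - t) 0 := max_le_max (by linarith) le_rfl
  linarith

lemma dcf_anti (hne : T.Nonempty) (hf : ∀ t ∈ T, 0 ≤ f t) : Antitone (dcf f T) := by
  intro u v huv
  refine le_dcf hne fun t ht => ?_
  refine (dcf_le hf ht v).trans ?_
  have : max (t - v) 0 ≤ max (t - u) 0 := max_le_max (by linarith) le_rfl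
  linarith

lemma icf_cont (hne : T.Nonempty) (hf : ∀ t ∈ T, 0 ≤ f t) : Continuous (icf f T) := by
  have h : LipschitzWith 1 (icf f T) := by
    refine LipschitzWith.of_le_add fun u v => ?_
    have key : icf f T u - dist u v ≤ icf f T v := by
      refine le_icf hne fun t ht => ?_
      have h1 := icf_le hf ht u
      have h2 : max (u - t) 0 ≤ max (v - t) 0 + dist u v := by
        rw [Real.dist_eq]
        refine max_le ?_ (by positivity)
        have : u - v ≤ |u - v| := le_abs_self _
        have : v - t ≤ max (v - t) 0 := le_max_left _ _
        linarith [le_abs_self (u - v)]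
      linarith
    linarith
  exact h.continuous

lemma dcf_cont (hne : T.Nonempty) (hf : ∀ t ∈ T, 0 ≤ f t) : Continuous (dcf f T) := by
  have h : LipschitzWith 1 (dcf f T) := by
    refine LipschitzWith.of_le_add fun u v => ?_
    have key : dcf f T u - dist u v ≤ dcf f T v := by
      refine le_dcf hne fun t ht => ?_
      have h1 := dcf_le hf ht u
      have h2 : max (t - u) 0 ≤ max (t - v) 0 + dist u v := by
        rw [Real.dist_eq]
        refine max_le ?_ (by positivity)
        have : t - v ≤ max (t - v) 0 := le_max_left _ _
        linarith [neg_abs_le (u - v)]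
      linarith
    linarith
  exact h.continuous

/-- Class `K` function: continuous, strictly increasing, zero at zero (on `[0,∞)`). -/
def ClassK (f : ℝ → ℝ) : Prop :=
  ContinuousOn f (Set.Ici 0) ∧ StrictMonoOn f (Set.Ici 0) ∧ f 0 = 0 ∧
    ∀ s, 0 ≤ s → 0 ≤ f s

/-- Class `K∞` function: class `K` and unbounded. -/
def ClassKinf (f : ℝ → ℝ) : Prop :=
  ClassK f ∧ ∀ M : ℝ, ∃ s, 0 ≤ s ∧ M < f s

/-- Class `L` function: continuous, strictly decreasing, positive, tending to `0` at `∞`. -/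
def ClassL (f : ℝ → ℝ) : Prop :=
  ContinuousOn f (Set.Ici 0) ∧ StrictAntiOn f (Set.Ici 0) ∧
    (∀ s, 0 ≤ s → 0 < f s) ∧ Filter.Tendsto f Filter.atTop (nhds 0)

/-- Class `KL` function. -/
def ClassKL (β : ℝ → ℝ → ℝ) : Prop :=
  (∀ t, 0 ≤ t → ClassK (fun s => β s t)) ∧
  ∀ s, 0 ≤ s → ContinuousOn (β s) (Set.Ici 0) ∧ AntitoneOn (β s) (Set.Ici 0) ∧
    Filter.Tendsto (β s) Filter.atTop (nhds 0)

/-- Positive definite function on `[0,∞)`. -/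
def PosDef (κ : ℝ → ℝ) : Prop := κ 0 = 0 ∧ ∀ s, 0 < s → 0 < κ s

/-- Lemma 3.5: any continuous positive definite `κ` dominates a product
`ρ₁ · ρ₂` with `ρ₁ ∈ K∞` and `ρ₂ ∈ L`. -/
theorem stmt0 (κ : ℝ → ℝ) (hκc : ContinuousOn κ (Set.Ici 0)) (hκpd : PosDef κ)
    (hκnn : ∀ s, 0 ≤ s → 0 ≤ κ s) :
    ∃ ρ₁ ρ₂ : ℝ → ℝ, ClassKinf ρ₁ ∧ ClassL ρ₂ ∧
      ∀ s, 0 ≤ s → ρ₁ s * ρ₂ s ≤ κ s := by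
  obtain ⟨hκ0, hκpos⟩ := hκpd
  have hT1 : (Icc (0:ℝ) 1).Nonempty := ⟨0, by norm_num⟩
  have hT2 : (Ici (1:ℝ)).Nonempty := ⟨1, self_mem_Ici⟩
  have hf1 : ∀ t ∈ Icc (0:ℝ) 1, 0 ≤ κ t := fun t ht => hκnn t ht.1
  have hf2 : ∀ t ∈ Ici (1:ℝ), 0 ≤ κ t := fun t ht => hκnn t (by linarith [mem_Ici.mp ht])
  set A : ℝ → ℝ := fun s => icf κ (Icc 0 1) (min s 1) with hA
  set B : ℝ → ℝ := fun s => dcf κ (Ici 1) (max s 1) with hB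
  -- basic facts about A
  have hA0 : A 0 = 0 := by
    refine le_antisymm ?_ (icf_nonneg hT1 hf1 _)
    have h := icf_le (f := κ) hf1 (t := 0) (by norm_num : (0:ℝ) ∈ Icc (0:ℝ) 1) (min 0 1)
    show icf κ (Icc 0 1) (min 0 1) ≤ 0
    simpa [hκ0] using h
  have hAmono : Monotone A := fun u v huv =>
    icf_mono hT1 hf1 (by simpa using min_le_min huv le_rfl)
  have hAcont : Continuous A :=
    (icf_cont hT1 hf1).comp (continuous_id.min continuous_const)
  have hAnn : ∀ s, 0 ≤ A s := fun s => icf_nonneg hT1 hf1 _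
  have hAle : ∀ s, 0 ≤ s → s ≤ 1 → A s ≤ κ s := by
    intro s hs0 hs1
    have h := icf_le (f := κ) hf1 (t := s) ⟨hs0, hs1⟩ (min s 1)
    have hm : min s 1 = s := min_eq_left hs1
    rw [hm] at h
    show icf κ (Icc 0 1) (min s 1) ≤ κ s
    rw [hm]
    simpa using h
  have hApos : ∀ s, 0 < s → 0 < A s := by
    intro s hs
    set u : ℝ := min s 1 with hu
    have hu0 : 0 < u := lt_min hs one_pos
    have hu1 : u ≤ 1 := min_le_right _ _
    obtain ⟨t₀, ht₀mem, ht₀min⟩ :=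
      (isCompact_Icc (a := u/2) (b := 1)).exists_isMinOn ⟨1, by constructor <;> linarith⟩
        (hκc.mono (fun x hx => le_trans (by linarith [hu0.le] : (0:ℝ) ≤ u/2) hx.1))
    have ht₀pos : 0 < κ t₀ := hκpos t₀ (by linarith [ht₀mem.1])
    have hc : 0 < min (κ t₀) (u/2) := lt_min ht₀pos (by linarith)
    refine lt_of_lt_of_le hc (le_icf hT1 fun t ht => ?_)
    rcases le_or_gt (u/2) t with h | h
    · have := ht₀min ⟨h, ht.2⟩
      have : κ t₀ ≤ κ t := this
      have := min_le_left (κ t₀) (u/2)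
      have hmax : (0:ℝ) ≤ max (u - t) 0 := le_max_right _ _
      simp only [isMinOn_iff] at ht₀min
      have := ht₀min t ⟨h, ht.2⟩
      linarith [le_max_right (u - t) (0:ℝ)]
    · have h1 : u/2 ≤ u - t := by linarith
      have h2 : u - t ≤ max (u - t) 0 := le_max_left _ _
      have := hf1 t ht
      have := min_le_right (κ t₀) (u/2)
      linarith
  -- basic facts about B
  have hBanti : Antitone B := fun u v huv =>
    dcf_anti hT2 hf2 (by simpa using max_le_max huv le_rfl)
  have hBcont : Continuous B :=
    (dcf_cont hT2 hf2).comp (continuous_id.max continuous_const)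
  have hBle : ∀ s, 1 ≤ s → B s ≤ κ s := by
    intro s hs
    have h := dcf_le (f := κ) hf2 (t := s) hs (max s 1)
    have hm : max s 1 = s := max_eq_left hs
    rw [hm] at h
    show dcf κ (Ici 1) (max s 1) ≤ κ s
    rw [hm]
    simpa using h
  have hBpos : ∀ s, 0 < B s := by
    intro s
    set u : ℝ := max s 1 with hu
    have hu1 : 1 ≤ u := le_max_right _ _
    obtain ⟨t₀, ht₀mem, ht₀min⟩ :=
      (isCompact_Icc (a := 1) (b := u+1)).exists_isMinOn ⟨1, by constructor <;> linarith⟩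
        (hκc.mono (fun x hx => le_trans (by norm_num) hx.1))
    have ht₀pos : 0 < κ t₀ := hκpos t₀ (by linarith [ht₀mem.1])
    have hc : 0 < min (κ t₀) 1 := lt_min ht₀pos one_pos
    refine lt_of_lt_of_le hc (le_dcf hT2 fun t ht => ?_)
    have ht1 : 1 ≤ t := ht
    rcases le_or_gt t (u+1) with h | h
    · simp only [isMinOn_iff] at ht₀min
      have := ht₀min t ⟨ht1, h⟩
      have := min_le_left (κ t₀) (1:ℝ)
      linarith [le_max_right (t - u) (0:ℝ)]
    · have h1 : (1:ℝ) ≤ t - u := by linarith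
      have h2 : t - u ≤ max (t - u) 0 := le_max_left _ _
      have := hf2 t ht
      have := min_le_right (κ t₀) (1:ℝ)
      linarith
  have hBeq : ∀ s, s ≤ 1 → B s = B 0 := by
    intro s hs
    simp only [hB]
    rw [max_eq_right hs, max_eq_right (by norm_num : (0:ℝ) ≤ 1)]
  have hB0pos : 0 < B 0 := hBpos 0
  -- the two functions
  set Abar : ℝ → ℝ := fun s => min (A s) (B 0) with hAbar
  have hAbarmono : Monotone Abar := fun u v huv => min_le_min (hAmono huv) le_rfl
  have hAbarpos : ∀ s, 0 < s → 0 < Abar s := fun s hs => lt_min (hApos s hs) hB0pos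
  have hAbarnn : ∀ s, 0 ≤ Abar s := fun s => le_min (hAnn s) hB0pos.le
  have hAbar0 : Abar 0 = 0 := by simp [hAbar, hA0, hB0pos.le]
  refine ⟨fun s => Abar s * (1 + s), fun s => B s / (B 0 * (1 + s)), ?_, ?_, ?_⟩
  · constructor
    · refine ⟨?_, ?_, ?_, ?_⟩
      · exact ((hAcont.min continuous_const).mul
          (continuous_const.add continuous_id)).continuousOn
      · intro x hx y hy hxy
        have hy0 : 0 < y := lt_of_le_of_lt hx hxy
        have h1 : Abar x * (1 + x) ≤ Abar y * (1 + x) :=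
          mul_le_mul_of_nonneg_right (hAbarmono hxy.le) (by simp only [mem_Ici] at hx; linarith)
        have h2 : Abar y * (1 + x) < Abar y * (1 + y) :=
          mul_lt_mul_of_pos_left (by linarith) (hAbarpos y hy0)
        show Abar x * (1 + x) < Abar y * (1 + y)
        linarith
      · simp [hAbar0]
      · intro s hs
        show 0 ≤ Abar s * (1 + s)
        have := hAbarnn s
        nlinarith
    · intro M
      have hA1 : 0 < Abar 1 := hAbarpos 1 one_pos
      set s : ℝ := max 1 ((|M| + 1) / Abar 1) with hs
      refine ⟨s, le_trans zero_le_one (le_max_left _ _), ?_⟩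
      have hs1 : 1 ≤ s := le_max_left _ _
      have hsge : (|M| + 1) / Abar 1 ≤ s := le_max_right _ _
      have h1 : |M| + 1 ≤ Abar 1 * s := by
        rw [div_le_iff₀ hA1] at hsge
        linarith
      have h2 : Abar 1 ≤ Abar s := hAbarmono hs1
      have h3 : Abar 1 * s ≤ Abar s * (1 + s) := by nlinarith
      have := le_abs_self M
      show M < Abar s * (1 + s)
      linarith
  · refine ⟨?_, ?_, ?_, ?_⟩
    · refine ContinuousOn.div hBcont.continuousOn
        (continuous_const.mul (continuous_const.add continuous_id)).continuousOn ?_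
      intro x hx
      simp only [mem_Ici] at hx
      positivity
    · intro x hx y hy hxy
      simp only [mem_Ici] at hx hy
      have h1 : B y / (B 0 * (1 + y)) < B y / (B 0 * (1 + x)) := by
        apply div_lt_div_of_pos_left (hBpos y) (by positivity)
        have : 0 < B 0 := hB0pos
        nlinarith
      have h2 : B y / (B 0 * (1 + x)) ≤ B x / (B 0 * (1 + x)) := by
        gcongr
        exact hBanti hxy.le
      show B y / (B 0 * (1 + y)) < B x / (B 0 * (1 + x))
      linarith
    · intro s hs
      have := hBpos s
      have : 0 < B 0 * (1 + s) := by positivity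
      positivity
    · have hb : ∀ᶠ s in Filter.atTop, B s / (B 0 * (1 + s)) ≤ (1 + s)⁻¹ := by
        filter_upwards [Filter.eventually_ge_atTop (0:ℝ)] with s hs
        rw [div_le_iff₀ (by positivity)]
        have h1 : B s ≤ B 0 := hBanti hs
        have h2 : (1 + s)⁻¹ * (B 0 * (1 + s)) = B 0 := by
          field_simp
        rw [h2]
        exact h1
      have h0 : ∀ᶠ s in Filter.atTop, 0 ≤ B s / (B 0 * (1 + s)) := by
        filter_upwards [Filter.eventually_ge_atTop (0:ℝ)] with s hs
        have := (hBpos s).le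
        positivity
      have hi : Filter.Tendsto (fun s : ℝ => (1 + s)⁻¹) Filter.atTop (nhds 0) := by
        apply Filter.Tendsto.inv_tendsto_atTop
        exact Filter.tendsto_atTop_add_const_left _ 1 Filter.tendsto_id
      exact squeeze_zero' h0 hb hi
  · intro s hs
    have hne : B 0 * (1 + s) ≠ 0 := by positivity
    have key : Abar s * (1 + s) * (B s / (B 0 * (1 + s))) = Abar s * B s / B 0 := by
      field_simp
    rw [key]
    rcases le_or_gt s 1 with h | h
    · rw [hBeq s h, mul_div_assoc, div_self hB0pos.ne', mul_one]
      exact le_trans (min_le_left _ _) (hAle s hs h)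
    · have h1 : Abar s ≤ B 0 := min_le_right _ _
      have h2 : Abar s * B s / B 0 ≤ B s := by
        rw [div_le_iff₀ hB0pos]
        nlinarith [hBpos s, hAbarnn s]
      exact le_trans h2 (hBle s h.le)
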